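/- Every edge of a graph lies in only finitely many bonds of size k of that graph, for any natural number k. (A bond is a minimal nonempty edge cut, equivalently a cut both of whose sides induce connected subgraphs.) -/

import Mathlib

open SimpleGraph

variable {V : Type*}

/-- The cut induced by a side `A`: edges of `G` with one endpoint in `A` and one outside. -/
def cutEdges (G : SimpleGraph V) (A : Set V) : Set (Sym2 V) :=
  {e | ∃ u v, e = s(u, v) ∧ G.Adj u v ∧ u ∈ A ∧ v ∉ A}

/-- A cut-separation, given by a side `A`: both sides nonempty. -/
def IsCutSep (_G : SimpleGraph V) (A : Set V) : Prop :=
  A.Nonempty ∧ Aᶜ.Nonempty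

/-- A bond-separation: a cut-separation both of whose sides induce connected subgraphs. -/
def IsBondSep (G : SimpleGraph V) (A : Set V) : Prop :=
  A.Nonempty ∧ Aᶜ.Nonempty ∧ (G.induce A).Connected ∧ (G.induce Aᶜ).Connected

/-- Two separations (given by sides) are nested. -/
def Nested (A C : Set V) : Prop :=
  A ⊆ C ∨ A ⊆ Cᶜ ∨ Aᶜ ⊆ C ∨ Aᶜ ⊆ Cᶜ

/-- Two separations cross if they are not nested. -/
def Crosses (A C : Set V) : Prop := ¬ Nested A C

/-- `u` and `v` are (<k)-inseparable: no edge set of size < k separates them. -/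
def Insep (G : SimpleGraph V) (k : ℕ) (u v : V) : Prop :=
  ∀ F : Set (Sym2 V), F.Finite → F.ncard < k → (G.deleteEdges F).Reachable u v

/-- A k-edge-block: an equivalence class of (<k)-inseparability. -/
def IsEdgeBlock (G : SimpleGraph V) (k : ℕ) (B : Set V) : Prop :=
  ∃ v, B = {w | Insep G k v w}

/-- The edge set `F` separates `B₁` from `B₂` in `G`. -/
def SepSets (G : SimpleGraph V) (B₁ B₂ : Set V) (F : Set (Sym2 V)) : Prop :=
  ∀ u ∈ B₁, ∀ v ∈ B₂, ¬ (G.deleteEdges F).Reachable u v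

/-- The minimum size of an edge set separating `B₁` from `B₂`. -/
noncomputable def sepOrder (G : SimpleGraph V) (B₁ B₂ : Set V) : ℕ :=
  sInf {n | ∃ F : Set (Sym2 V), F.Finite ∧ F.ncard = n ∧ SepSets G B₁ B₂ F}

/-- `F` is a minimal edge set separating `u` from `v`. -/
def MinCut (G : SimpleGraph V) (u v : V) (F : Set (Sym2 V)) : Prop :=
  ¬ (G.deleteEdges F).Reachable u v ∧ ∀ f ∈ F, (G.deleteEdges (F \ {f})).Reachable u v

lemma minCut_symm {G : SimpleGraph V} {u v : V} {F : Set (Sym2 V)}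
    (h : MinCut G u v F) : MinCut G v u F :=
  ⟨fun hr => h.1 hr.symm, fun f hf => (h.2 f hf).symm⟩

/-- Walking in `G` minus a superset of the cut edges of `A` cannot leave `A`. -/
lemma walk_stay {G : SimpleGraph V} {A : Set V} {F : Set (Sym2 V)}
    (hF : cutEdges G A ⊆ F) : ∀ {x y : V},
    (G.deleteEdges F).Walk x y → x ∈ A → y ∈ A := by
  intro x y w
  induction w with
  | nil => exact id
  | cons h w ih =>
    intro hx
    rw [deleteEdges_adj] at h
    apply ih
    by_contra hz
    exact h.2 (hF ⟨_, _, rfl, h.1, hx, hz⟩)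

lemma reach_stay {G : SimpleGraph V} {A : Set V} {F : Set (Sym2 V)}
    (hF : cutEdges G A ⊆ F) {x y : V}
    (h : (G.deleteEdges F).Reachable x y) (hx : x ∈ A) : y ∈ A := by
  obtain ⟨w⟩ := h
  exact walk_stay hF w hx

/-- Reachability in an induced subgraph transfers to `G.deleteEdges F` when `F`
contains no edge within the inducing set. -/
lemma induce_reach {G : SimpleGraph V} {A : Set V} {F : Set (Sym2 V)}
    (hF : ∀ p q : V, p ∈ A → q ∈ A → s(p, q) ∉ F) {a b : ↥A}
    (h : (G.induce A).Reachable a b) : (G.deleteEdges F).Reachable a.1 b.1 := by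
  obtain ⟨w⟩ := h
  induction w with
  | nil => exact Reachable.refl _
  | @cons x c y hadj w ih =>
    have h1 : (G.deleteEdges F).Adj x.1 c.1 := by
      rw [deleteEdges_adj]
      exact ⟨hadj, hF _ _ x.2 c.2⟩
    exact h1.reachable.trans ih

lemma not_mem_cutEdges_of_left {G : SimpleGraph V} {A : Set V} {p q : V}
    (hp : p ∈ A) (hq : q ∈ A) : s(p, q) ∉ cutEdges G A := by
  rintro ⟨u, v, huv, -, hu, hv⟩
  rcases Sym2.eq_iff.mp huv with ⟨rfl, rfl⟩ | ⟨rfl, rfl⟩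
  · exact hv hq
  · exact hv hp

lemma not_mem_cutEdges_of_right {G : SimpleGraph V} {A : Set V} {p q : V}
    (hp : p ∉ A) (hq : q ∉ A) : s(p, q) ∉ cutEdges G A := by
  rintro ⟨u, v, huv, -, hu, hv⟩
  rcases Sym2.eq_iff.mp huv with ⟨rfl, rfl⟩ | ⟨rfl, rfl⟩
  · exact hp hu
  · exact hq hu

/-- The cut of a bond-separation is a minimal `a`-`b` cut for any `a ∈ A`, `b ∉ A`. -/
lemma bond_minCut {G : SimpleGraph V} {A : Set V} (h : IsBondSep G A)
    {a b : V} (ha : a ∈ A) (hb : b ∉ A) : MinCut G a b (cutEdges G A) := by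
  obtain ⟨-, -, hA, hB⟩ := h
  constructor
  · intro hr
    exact hb (reach_stay subset_rfl hr ha)
  · rintro f ⟨x, y, rfl, hxy, hx, hy⟩
    have h1 : (G.deleteEdges (cutEdges G A \ {s(x, y)})).Reachable a x := by
      refine induce_reach (A := A) (a := ⟨a, ha⟩) (b := ⟨x, hx⟩)
        (fun p q hp hq hmem => not_mem_cutEdges_of_left hp hq hmem.1) ?_
      exact hA.preconnected _ _
    have h2 : (G.deleteEdges (cutEdges G A \ {s(x, y)})).Adj x y := by
      rw [deleteEdges_adj]
      exact ⟨hxy, fun hmem => hmem.2 rfl⟩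
    have h3 : (G.deleteEdges (cutEdges G A \ {s(x, y)})).Reachable y b := by
      refine induce_reach (A := Aᶜ) (a := ⟨y, hy⟩) (b := ⟨b, hb⟩)
        (fun p q hp hq hmem => not_mem_cutEdges_of_right hp hq hmem.1) ?_
      exact hB.preconnected _ _
    exact (h1.trans h2.reachable).trans h3

/-- There are only finitely many minimal `u`-`v` cuts of size at most `k`. -/
lemma minCut_finite : ∀ (k : ℕ) (G : SimpleGraph V) (u v : V),
    {F : Set (Sym2 V) | F.Finite ∧ F.ncard ≤ k ∧ MinCut G u v F}.Finite := by
  intro k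
  induction k with
  | zero =>
    intro G u v
    refine (Set.finite_singleton (∅ : Set (Sym2 V))).subset ?_
    rintro F ⟨hfin, hcard, -⟩
    exact (Set.ncard_eq_zero hfin).mp (Nat.le_zero.mp hcard)
  | succ k ih =>
    intro G u v
    classical
    by_cases hr : G.Reachable u v
    · obtain ⟨p⟩ := hr
      have key : ∀ F : Set (Sym2 V), MinCut G u v F → ∃ f ∈ p.edges.toFinset, f ∈ F := by
        intro F hF
        by_contra hcon
        push_neg at hcon
        refine hF.1 ⟨p.transfer (G.deleteEdges F) ?_⟩
        intro f hf
        rw [edgeSet_deleteEdges]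
        exact ⟨p.edges_subset_edgeSet hf, hcon f (List.mem_toFinset.mpr hf)⟩
      have hsub : {F : Set (Sym2 V) | F.Finite ∧ F.ncard ≤ k + 1 ∧ MinCut G u v F} ⊆
          ⋃ f ∈ p.edges.toFinset,
            {F : Set (Sym2 V) | (F.Finite ∧ F.ncard ≤ k + 1 ∧ MinCut G u v F) ∧ f ∈ F} := by
        rintro F ⟨hfin, hcard, hmin⟩
        obtain ⟨f, hfp, hfF⟩ := key F hmin
        exact Set.mem_biUnion hfp ⟨⟨hfin, hcard, hmin⟩, hfF⟩
      refine Set.Finite.subset ?_ hsub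
      refine Set.Finite.biUnion (p.edges.toFinset : Finset (Sym2 V)).finite_toSet ?_
      intro f _
      refine Set.Finite.of_finite_image (f := fun F => F \ {f}) ?_ ?_
      · refine (ih (G.deleteEdges {f}) u v).subset ?_
        rintro _ ⟨F, ⟨⟨hfin, hcard, hmin⟩, hfF⟩, rfl⟩
        have hFne : F.ncard ≠ 0 := by
          intro h0
          rw [Set.ncard_eq_zero hfin] at h0
          subst h0
          exact hfF
        refine ⟨hfin.diff, ?_, ?_, ?_⟩
        · rw [Set.ncard_diff_singleton_of_mem hfF]
          omega
        · rw [deleteEdges_deleteEdges, Set.union_diff_cancel (by simpa using hfF)]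
          exact hmin.1
        · rintro f' hf'
          rw [deleteEdges_deleteEdges]
          have heq : ({f} : Set (Sym2 V)) ∪ (F \ {f}) \ {f'} = F \ {f'} := by
            have hne : f ≠ f' := fun h => hf'.2 (h ▸ rfl) |>.elim
            ext x
            simp only [Set.mem_union, Set.mem_diff, Set.mem_singleton_iff]
            constructor
            · rintro (rfl | ⟨⟨hx, -⟩, hx'⟩)
              · exact ⟨hfF, hne⟩
              · exact ⟨hx, hx'⟩
            · rintro ⟨hx, hx'⟩
              by_cases hxf : x = f
              · exact Or.inl hxf
              · exact Or.inr ⟨⟨hx, hxf⟩, hx'⟩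
          rw [heq]
          exact hmin.2 f' hf'.1
      · rintro F1 ⟨-, h1⟩ F2 ⟨-, h2⟩ heq
        change F1 \ {f} = F2 \ {f} at heq
        have : F1 \ {f} ∪ {f} = F2 \ {f} ∪ {f} := by rw [heq]
        rwa [Set.diff_union_of_subset (by simpa using h1),
          Set.diff_union_of_subset (by simpa using h2)] at this
    · refine (Set.finite_singleton (∅ : Set (Sym2 V))).subset ?_
      rintro F ⟨-, -, hmin⟩
      rcases Set.eq_empty_or_nonempty F with rfl | ⟨f, hf⟩
      · rfl
      · exact absurd ((hmin.2 f hf).mono (deleteEdges_le _)) hr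

/-- Every edge lies in only finitely many bonds of size k. -/
theorem stmt_0 (G : SimpleGraph V) (e : Sym2 V) (k : ℕ) :
    {F : Set (Sym2 V) | (∃ A : Set V, IsBondSep G A ∧ F = cutEdges G A) ∧
      F.Finite ∧ F.ncard = k ∧ e ∈ F}.Finite := by
  by_cases hS : {F : Set (Sym2 V) | (∃ A : Set V, IsBondSep G A ∧ F = cutEdges G A) ∧
      F.Finite ∧ F.ncard = k ∧ e ∈ F}.Nonempty
  · obtain ⟨F₀, ⟨A₀, hb₀, rfl⟩, -, -, he₀⟩ := hS
    obtain ⟨u, v, rfl, -, -, -⟩ := he₀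
    refine (minCut_finite k G u v).subset ?_
    rintro F ⟨⟨A, hbond, rfl⟩, hfin, hcard, he⟩
    refine ⟨hfin, le_of_eq hcard, ?_⟩
    obtain ⟨x, y, hxy, -, hx, hy⟩ := he
    rcases Sym2.eq_iff.mp hxy with ⟨rfl, rfl⟩ | ⟨rfl, rfl⟩
    · exact bond_minCut hbond hx hy
    · exact minCut_symm (bond_minCut hbond hx hy)
  · rw [Set.not_nonempty_iff_eq_empty] at hS
    rw [hS]
    exact Set.finite_empty
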